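/- With Q(k, p̃, m) := Π_{ℓ=m−k+1}^{m} P(|T(ℓ)| ≤ √(ℓ/p̃)), where T(ℓ) has Student distribution with ℓ degrees of freedom, and assuming π p̃ ≥ 2m, one has Q(k, p̃, m)² ≤ (2/(π p̃))^k · m!/(m−k)!. -/

import Mathlib

/-- Density of the Student t-distribution with `d` degrees of freedom. -/
noncomputable def studentPDF (d : ℝ) (x : ℝ) : ℝ :=
  Real.Gamma ((d + 1) / 2) / (Real.sqrt (d * Real.pi) * Real.Gamma (d / 2)) *
    (1 + x ^ 2 / d) ^ (-((d + 1) / 2))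

/-- Log-convexity of Γ gives `Γ((d+1)/2) ≤ √(d/2) Γ(d/2)`. -/
lemma gamma_half_le (d : ℝ) (hd : 0 < d) :
    Real.Gamma ((d + 1) / 2) ≤ Real.sqrt (d / 2) * Real.Gamma (d / 2) := by
  have h2 : (0:ℝ) < d / 2 := by linarith
  have h3 : (0:ℝ) < d / 2 + 1 := by linarith
  have hconv := Real.convexOn_log_Gamma.2 (Set.mem_Ioi.mpr h2) (Set.mem_Ioi.mpr h3)
      (by norm_num : (0:ℝ) ≤ (1:ℝ)/2) (by norm_num : (0:ℝ) ≤ (1:ℝ)/2) (by norm_num)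
  simp only [Function.comp_apply, smul_eq_mul] at hconv
  have hmid : (1:ℝ)/2 * (d/2) + (1:ℝ)/2 * (d/2 + 1) = (d + 1) / 2 := by ring
  rw [hmid] at hconv
  have hG2 : 0 < Real.Gamma (d / 2) := Real.Gamma_pos_of_pos h2
  have hG1 : 0 < Real.Gamma ((d + 1) / 2) := Real.Gamma_pos_of_pos (by linarith)
  have hGadd : Real.Gamma (d / 2 + 1) = (d / 2) * Real.Gamma (d / 2) := by
    rw [Real.Gamma_add_one (ne_of_gt h2)]
  rw [hGadd] at hconv
  have hrhs : (1:ℝ)/2 * Real.log (Real.Gamma (d/2)) +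
      (1:ℝ)/2 * Real.log ((d/2) * Real.Gamma (d/2)) =
      Real.log (Real.sqrt (d/2) * Real.Gamma (d/2)) := by
    rw [Real.log_mul (ne_of_gt h2) (ne_of_gt hG2),
      Real.log_mul (ne_of_gt (Real.sqrt_pos.mpr h2)) (ne_of_gt hG2),
      Real.log_sqrt (le_of_lt h2)]
    ring
  rw [hrhs] at hconv
  have := Real.exp_le_exp.mpr hconv
  rwa [Real.exp_log hG1, Real.exp_log (by positivity)] at this

/-- The Student density is bounded by `1/√(2π)` for `d > 0`. -/
lemma studentPDF_le (d : ℝ) (hd : 0 < d) (x : ℝ) :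
    studentPDF d x ≤ 1 / Real.sqrt (2 * Real.pi) := by
  have hπ := Real.pi_pos
  have hG2 : 0 < Real.Gamma (d / 2) := Real.Gamma_pos_of_pos (by linarith)
  have hbase : (1:ℝ) ≤ 1 + x ^ 2 / d := by
    have : 0 ≤ x ^ 2 / d := by positivity
    linarith
  have hpow : (1 + x ^ 2 / d) ^ (-((d + 1) / 2)) ≤ 1 := by
    apply Real.rpow_le_one_of_one_le_of_nonpos hbase
    linarith
  have hC : Real.Gamma ((d + 1) / 2) / (Real.sqrt (d * Real.pi) * Real.Gamma (d / 2)) ≤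
      1 / Real.sqrt (2 * Real.pi) := by
    rw [div_le_div_iff₀ (by positivity) (by positivity)]
    calc Real.Gamma ((d + 1) / 2) * Real.sqrt (2 * Real.pi)
        ≤ (Real.sqrt (d / 2) * Real.Gamma (d / 2)) * Real.sqrt (2 * Real.pi) := by
          apply mul_le_mul_of_nonneg_right (gamma_half_le d hd) (Real.sqrt_nonneg _)
      _ = 1 * (Real.sqrt (d * Real.pi) * Real.Gamma (d / 2)) := by
          have hs : Real.sqrt (d / 2) * Real.sqrt (2 * Real.pi) = Real.sqrt (d * Real.pi) := by
            rw [← Real.sqrt_mul (by positivity : (0:ℝ) ≤ d / 2)]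
            congr 1; ring
          rw [← hs]; ring
  calc studentPDF d x
      ≤ Real.Gamma ((d + 1) / 2) / (Real.sqrt (d * Real.pi) * Real.Gamma (d / 2)) * 1 := by
        unfold studentPDF
        apply mul_le_mul_of_nonneg_left hpow (by positivity)
    _ ≤ 1 / Real.sqrt (2 * Real.pi) := by rw [mul_one]; exact hC

lemma studentPDF_nonneg (d : ℝ) (hd : 0 < d) (x : ℝ) : 0 ≤ studentPDF d x := by
  have hG2 : 0 < Real.Gamma (d / 2) := Real.Gamma_pos_of_pos (by linarith)
  have hG1 : 0 < Real.Gamma ((d + 1) / 2) := Real.Gamma_pos_of_pos (by linarith)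
  have hπ := Real.pi_pos
  unfold studentPDF
  positivity

/-- Per-factor squared bound. -/
lemma integral_sq_le (d : ℝ) (hd : 0 < d) (ptilde : ℝ) (hp : 0 < ptilde) :
    (∫ x in Set.Icc (-Real.sqrt (d / ptilde)) (Real.sqrt (d / ptilde)),
      studentPDF d x) ^ 2 ≤ 2 / (Real.pi * ptilde) * d := by
  set a := Real.sqrt (d / ptilde) with ha
  have ha0 : 0 ≤ a := Real.sqrt_nonneg _
  have hπ := Real.pi_pos
  have hvol : (MeasureTheory.volume (Set.Icc (-a) a)) < ⊤ := by
    rw [Real.volume_Icc]; exact ENNReal.ofReal_lt_top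
  have hbd : ∀ x ∈ Set.Icc (-a) a, ‖studentPDF d x‖ ≤ 1 / Real.sqrt (2 * Real.pi) := by
    intro x _
    rw [Real.norm_of_nonneg (studentPDF_nonneg d hd x)]
    exact studentPDF_le d hd x
  have hnorm : ‖∫ x in Set.Icc (-a) a, studentPDF d x‖ ≤ 1 / Real.sqrt (2 * Real.pi) *
      (MeasureTheory.volume (Set.Icc (-a) a)).toReal :=
    MeasureTheory.norm_setIntegral_le_of_norm_le_const hvol hbd
  have hvolval : (MeasureTheory.volume (Set.Icc (-a) a)).toReal = 2 * a := by
    rw [Real.volume_Icc, ENNReal.toReal_ofReal (by linarith)]; ring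
  rw [hvolval] at hnorm
  have hI : |∫ x in Set.Icc (-a) a, studentPDF d x| ≤ 1 / Real.sqrt (2 * Real.pi) * (2 * a) := by
    simpa [Real.norm_eq_abs] using hnorm
  have hsq : (∫ x in Set.Icc (-a) a, studentPDF d x) ^ 2 ≤
      (1 / Real.sqrt (2 * Real.pi) * (2 * a)) ^ 2 := by
    rw [← sq_abs]
    apply pow_le_pow_left₀ (abs_nonneg _) hI
  refine hsq.trans (le_of_eq ?_)
  have hsqa : a ^ 2 = d / ptilde := Real.sq_sqrt (by positivity)
  have h2π : Real.sqrt (2 * Real.pi) ^ 2 = 2 * Real.pi := Real.sq_sqrt (by positivity)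
  have hs0 : (0:ℝ) < Real.sqrt (2 * Real.pi) := Real.sqrt_pos.mpr (by positivity)
  rw [mul_pow, div_pow, one_pow, h2π, mul_pow, hsqa]
  field_simp

theorem studentT_product_bound (m k : ℕ) (hk1 : 1 ≤ k) (hkm : k ≤ m)
    (ptilde : ℝ) (hp : 0 < ptilde) (hπ : 2 * m ≤ Real.pi * ptilde) :
    (∏ l ∈ Finset.Icc (m - k + 1) m,
        ∫ x in Set.Icc (-Real.sqrt (l / ptilde)) (Real.sqrt (l / ptilde)),
          studentPDF l x) ^ 2 ≤
      (2 / (Real.pi * ptilde)) ^ k *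
        (m.factorial / (m - k).factorial : ℝ) := by
  have hπ0 := Real.pi_pos
  have hstep : ∀ l ∈ Finset.Icc (m - k + 1) m,
      (∫ x in Set.Icc (-Real.sqrt (l / ptilde)) (Real.sqrt (l / ptilde)),
        studentPDF l x) ^ 2 ≤ 2 / (Real.pi * ptilde) * l := by
    intro l hl
    have hl1 : 1 ≤ l := le_trans (Nat.succ_le_succ (Nat.zero_le _)) (Finset.mem_Icc.mp hl).1
    exact integral_sq_le l (by exact_mod_cast hl1) ptilde hp
  calc (∏ l ∈ Finset.Icc (m - k + 1) m,
        ∫ x in Set.Icc (-Real.sqrt (l / ptilde)) (Real.sqrt (l / ptilde)),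
          studentPDF l x) ^ 2
      = ∏ l ∈ Finset.Icc (m - k + 1) m,
        ((∫ x in Set.Icc (-Real.sqrt (l / ptilde)) (Real.sqrt (l / ptilde)),
          studentPDF l x) ^ 2) := by rw [Finset.prod_pow]
    _ ≤ ∏ l ∈ Finset.Icc (m - k + 1) m, (2 / (Real.pi * ptilde) * l) := by
        apply Finset.prod_le_prod
        · intro i _; positivity
        · exact hstep
    _ = (2 / (Real.pi * ptilde)) ^ k * ∏ l ∈ Finset.Icc (m - k + 1) m, (l : ℝ) := by
        rw [Finset.prod_mul_distrib, Finset.prod_const]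
        congr 2
        rw [Nat.card_Icc]
        omega
    _ = (2 / (Real.pi * ptilde)) ^ k * (m.factorial / (m - k).factorial : ℝ) := by
        congr 1
        have hnat : ∀ n : ℕ, ∏ l ∈ Finset.Ioc 0 n, l = n.factorial := by
          intro n
          rw [← Finset.Icc_add_one_left_eq_Ioc, ← Finset.Ico_add_one_right_eq_Icc]
          exact Finset.prod_Ico_id_eq_factorial n
        have keynat : (m - k).factorial * ∏ l ∈ Finset.Icc (m - k + 1) m, l
            = m.factorial := by
          rw [← hnat (m - k), ← hnat m, Finset.Icc_add_one_left_eq_Ioc]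
          exact Finset.prod_Ioc_consecutive _ (Nat.zero_le _) (Nat.sub_le m k)
        have key : ((m - k).factorial : ℝ) * ∏ l ∈ Finset.Icc (m - k + 1) m, (l : ℝ)
            = (m.factorial : ℝ) := by
          rw [← Nat.cast_prod, ← Nat.cast_mul, keynat]
        have hfac : (0:ℝ) < ((m - k).factorial : ℝ) := by positivity
        field_simp
        linarith [key]
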